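/- Let V = ℝ^n and let U_1, ..., U_m be proper linear subspaces of V. Then for every integer k with 0 ≤ k ≤ n there exists a k-dimensional subspace V' of V such that dim(U_i ∩ V') = max{dim(U_i) + k - n, 0} for every 1 ≤ i ≤ m. -/

import Mathlib

open Module

private lemma exists_notMem_aux {ι : Type*} [Finite ι] {E : Type*} [AddCommGroup E]
    [Module ℝ E] (p : ι → Submodule ℝ E) (h : ∀ i, p i ≠ ⊤) :
    ∃ x : E, ∀ i, x ∉ p i := by
  by_contra hc
  push_neg at hc
  have hcov : ⋃ i, ((p i : Set E)) = Set.univ := by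
    ext x; simp only [Set.mem_iUnion, Set.mem_univ, iff_true]
    obtain ⟨i, hi⟩ := hc x
    exact ⟨i, hi⟩
  obtain ⟨i, hi⟩ := Subspace.exists_eq_top_of_iUnion_eq_univ hcov
  exact h i hi

private lemma furedi_aux (n m : ℕ) (U : Fin m → Submodule ℝ (Fin n → ℝ))
    (hU : ∀ i, U i ≠ ⊤) (k : ℕ) (hk : k ≤ n) :
    ∃ V' : Submodule ℝ (Fin n → ℝ), Module.finrank ℝ ↥V' = k ∧
      ∀ i, Module.finrank ℝ ↥(U i ⊔ V') = min (Module.finrank ℝ ↥(U i) + k) n := by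
  induction k with
  | zero =>
    refine ⟨⊥, finrank_bot ℝ _, fun i => ?_⟩
    have h1 : Module.finrank ℝ ↥(U i) < n := by
      have := Submodule.finrank_lt (K := ℝ) (hU i)
      simpa [Module.finrank_fin_fun] using this
    rw [sup_bot_eq]
    omega
  | succ k ih =>
    classical
    obtain ⟨V', hV'k, hV'⟩ := ih (by omega)
    -- family of proper subspaces to avoid
    set P : Option (Fin m) → Submodule ℝ (Fin n → ℝ) :=
      fun o => match o with
        | none => V'
        | some i => if U i ⊔ V' = ⊤ then V' else U i ⊔ V'
    have hP : ∀ o, P o ≠ ⊤ := by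
      have hV'top : V' ≠ ⊤ := by
        intro h
        rw [h, finrank_top, Module.finrank_fin_fun] at hV'k
        omega
      rintro (_ | i)
      · exact hV'top
      · simp only [P]
        split
        · exact hV'top
        · assumption
    obtain ⟨x, hx⟩ := exists_notMem_aux P hP
    have hxV' : x ∉ V' := hx none
    have hx0 : x ≠ 0 := fun h => hxV' (h ▸ V'.zero_mem)
    refine ⟨V' ⊔ Submodule.span ℝ {x}, ?_, ?_⟩
    · have hinf : V' ⊓ Submodule.span ℝ {x} = ⊥ := by
        rw [eq_bot_iff]
        rintro y ⟨hy1, hy2⟩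
        obtain ⟨c, rfl⟩ := Submodule.mem_span_singleton.mp hy2
        rcases eq_or_ne c 0 with rfl | hc
        · simp
        · exact absurd (by simpa [smul_smul, inv_mul_cancel₀ hc] using V'.smul_mem c⁻¹ hy1) hxV'
      have := Submodule.finrank_sup_add_finrank_inf_eq V' (Submodule.span ℝ {x})
      rw [hinf, finrank_bot, finrank_span_singleton hx0, hV'k] at this
      omega
    · intro i
      have hdim : Module.finrank ℝ ↥(U i) < n := by
        have := Submodule.finrank_lt (K := ℝ) (hU i)
        simpa [Module.finrank_fin_fun] using this
      have hsup := hV' i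
      rcases le_or_gt n (Module.finrank ℝ ↥(U i) + k) with hge | hlt
      · -- U i ⊔ V' = ⊤
        have htop : U i ⊔ V' = ⊤ := by
          apply Submodule.eq_top_of_finrank_eq
          rw [hsup, Module.finrank_fin_fun]
          omega
        have : U i ⊔ (V' ⊔ Submodule.span ℝ {x}) = ⊤ := by
          rw [← sup_assoc, htop, top_sup_eq]
        rw [this, finrank_top, Module.finrank_fin_fun]
        omega
      · -- U i ⊔ V' proper, x avoids it
        have hne : U i ⊔ V' ≠ ⊤ := by
          intro h
          rw [h, finrank_top, Module.finrank_fin_fun] at hsup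
          omega
        have hxU : x ∉ U i ⊔ V' := by
          have := hx (some i)
          simpa only [P, if_neg hne] using this
        have heq : U i ⊔ (V' ⊔ Submodule.span ℝ {x})
            = (U i ⊔ V') ⊔ Submodule.span ℝ {x} := by rw [sup_assoc]
        have hinf : (U i ⊔ V') ⊓ Submodule.span ℝ {x} = ⊥ := by
          rw [eq_bot_iff]
          rintro y ⟨hy1, hy2⟩
          obtain ⟨c, rfl⟩ := Submodule.mem_span_singleton.mp hy2
          rcases eq_or_ne c 0 with rfl | hc
          · simp
          · exact absurd (by simpa [smul_smul, inv_mul_cancel₀ hc] using (U i ⊔ V').smul_mem c⁻¹ hy1) hxU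
        have hx0' : x ≠ 0 := hx0
        have hf := Submodule.finrank_sup_add_finrank_inf_eq (U i ⊔ V')
          (Submodule.span ℝ {x})
        rw [hinf, finrank_bot, finrank_span_singleton hx0', hsup] at hf
        rw [heq]
        omega

/-- Füredi's general position lemma for real vector spaces: given proper subspaces
`U₁, …, Uₘ` of `ℝⁿ` and `k ≤ n`, there is a `k`-dimensional subspace `V'` with
`dim (Uᵢ ∩ V') = max (dim Uᵢ + k - n) 0` for every `i` (truncated subtraction on `ℕ`). -/
theorem furedi_general_position (n m : ℕ) (U : Fin m → Submodule ℝ (Fin n → ℝ))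
    (hU : ∀ i, U i ≠ ⊤) (k : ℕ) (hk : k ≤ n) :
    ∃ V' : Submodule ℝ (Fin n → ℝ), Module.finrank ℝ ↥V' = k ∧
      ∀ i, Module.finrank ℝ ↥(U i ⊓ V') = Module.finrank ℝ ↥(U i) + k - n := by
  obtain ⟨V', hV'k, hV'⟩ := furedi_aux n m U hU k hk
  refine ⟨V', hV'k, fun i => ?_⟩
  have hf := Submodule.finrank_sup_add_finrank_inf_eq (U i) V'
  rw [hV' i, hV'k] at hf
  omega
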